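/- arXiv:1703.05468 — 4 statements merged into one kernel-verified Lean document; each statement's English description precedes it below -/
import Mathlib

section
/- Let m ≥ 1, μ ∈ ℝ^m, and let Σ be a positive-definite real m×m matrix. Let f be a probability density on ℝ^m such that x ↦ f(x)·log f(x) is integrable, with mean μ and covariance matrix Σ. If the differential entropy of f attains the maximum value, h(f) = (1/2)·log((2π)^m · det Σ) + m/2, then f equals the multivariate normal density g_{μ,Σ} almost everywhere with respect to Lebesgue measure. In particular, the entropy-maximizing density with the given mean and covariance is unique up to almost-everywhere equality. -/
open MeasureTheory Matrix Real

/-- The multivariate normal density on `ℝ^m` with mean `μ` and covariance `S`. -/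
noncomputable def mvnPdf {m : ℕ} (μ : Fin m → ℝ) (S : Matrix (Fin m) (Fin m) ℝ)
    (x : Fin m → ℝ) : ℝ :=
  (2 * π) ^ (-(m : ℝ) / 2) * S.det ^ (-(1 : ℝ) / 2) *
    Real.exp (-(1 / 2) * ((x - μ) ⬝ᵥ S⁻¹ *ᵥ (x - μ)))

/-- Differential entropy of a density `f` on `ℝ^m` (w.r.t. Lebesgue measure). -/
noncomputable def diffEntropy {m : ℕ} (f : (Fin m → ℝ) → ℝ) : ℝ :=
  -∫ x : Fin m → ℝ, f x * Real.log (f x)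

lemma std_gauss (m : ℕ) :
    ∫ x : Fin m → ℝ, Real.exp (-(1/2) * (x ⬝ᵥ x)) = (2 * π) ^ ((m : ℝ) / 2) := by
  have h := EuclideanSpace.volume_preserving_symm_measurableEquiv_toLp (Fin m)
  have hcomp := h.integral_comp (MeasurableEquiv.toLp 2 (Fin m → ℝ)).symm.measurableEmbedding
    (fun x : Fin m → ℝ => Real.exp (-(1/2) * (x ⬝ᵥ x)))
  rw [← hcomp]
  have : ∀ v : EuclideanSpace ℝ (Fin m),
      Real.exp (-(1/2) * ((MeasurableEquiv.toLp 2 (Fin m → ℝ)).symm v ⬝ᵥ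
        (MeasurableEquiv.toLp 2 (Fin m → ℝ)).symm v)) = Real.exp (-(1/2 : ℝ) * ‖v‖ ^ 2) := by
    intro v
    congr 1
    rw [EuclideanSpace.norm_eq]
    rw [Real.sq_sqrt (by positivity)]
    simp [dotProduct, pow_two]
  simp_rw [this]
  rw [GaussianFourier.integral_rexp_neg_mul_sq_norm (by norm_num : (0:ℝ) < 1/2)]
  norm_num
  congr 1
  ring

lemma contquad {m : ℕ} (M : Matrix (Fin m) (Fin m) ℝ) :
    Continuous fun x : Fin m → ℝ => x ⬝ᵥ M *ᵥ x := by
  simp only [dotProduct, Matrix.mulVec]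
  fun_prop

open scoped MatrixOrder in
lemma gauss_quad {m : ℕ} (S : Matrix (Fin m) (Fin m) ℝ) (hS : S.PosDef) :
    ∫ x : Fin m → ℝ, Real.exp (-(1/2) * (x ⬝ᵥ S⁻¹ *ᵥ x))
      = (2 * π) ^ ((m : ℝ) / 2) * S.det ^ ((1:ℝ)/2) := by
  classical
  set L := CFC.sqrt S with hLdef
  have hLL : L * L = S := CFC.sqrt_mul_sqrt_self S hS.posSemidef.nonneg
  have hLsym : Lᵀ = L := by
    rw [← Matrix.conjTranspose_eq_transpose_of_trivial]
    exact (CFC.sqrt_nonneg S).isSelfAdjoint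
  have hdetS : 0 < S.det := hS.det_pos
  have hdet2 : L.det * L.det = S.det := by rw [← Matrix.det_mul, hLL]
  have hdetL : L.det ≠ 0 := by
    intro h; rw [h, zero_mul] at hdet2; exact hdetS.ne hdet2
  have hLunit : IsUnit L.det := hdetL.isUnit
  have key : L * (S⁻¹ * L) = 1 := by
    rw [← hLL, Matrix.mul_inv_rev, ← Matrix.mul_assoc, ← Matrix.mul_assoc,
      Matrix.mul_nonsing_inv L hLunit, Matrix.one_mul, Matrix.nonsing_inv_mul L hLunit]
  have quad : ∀ y : Fin m → ℝ, (L *ᵥ y) ⬝ᵥ S⁻¹ *ᵥ (L *ᵥ y) = y ⬝ᵥ y := by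
    intro y
    rw [Matrix.mulVec_mulVec, ← hLsym, Matrix.mulVec_transpose,
      Matrix.dotProduct_mulVec, Matrix.vecMul_vecMul, hLsym, key, Matrix.vecMul_one]
  have hmap : Measure.map (Matrix.toLin' L) volume
      = ENNReal.ofReal |L.det|⁻¹ • volume := by
    have := Real.map_linearMap_volume_pi_eq_smul_volume_pi
      (f := Matrix.toLin' L) (by rwa [LinearMap.det_toLin'])
    rw [this, LinearMap.det_toLin', abs_inv]
  have hcont : Continuous fun x : Fin m → ℝ => Real.exp (-(1/2) * (x ⬝ᵥ S⁻¹ *ᵥ x)) :=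
    Real.continuous_exp.comp ((continuous_const.mul (contquad S⁻¹)))
  have hmeasT : Measurable (Matrix.toLin' L) :=
    (Matrix.toLin' L).continuous_of_finiteDimensional.measurable
  have step : ∫ y : Fin m → ℝ,
      Real.exp (-(1/2) * ((Matrix.toLin' L y) ⬝ᵥ S⁻¹ *ᵥ (Matrix.toLin' L y)))
      = |L.det|⁻¹ * ∫ x : Fin m → ℝ, Real.exp (-(1/2) * (x ⬝ᵥ S⁻¹ *ᵥ x)) := by
    rw [← integral_map hmeasT.aemeasurable hcont.aestronglyMeasurable, hmap,
      integral_smul_measure, ENNReal.toReal_ofReal (by positivity), smul_eq_mul]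
  have step2 : ∀ y : Fin m → ℝ,
      Real.exp (-(1/2) * ((Matrix.toLin' L y) ⬝ᵥ S⁻¹ *ᵥ (Matrix.toLin' L y)))
      = Real.exp (-(1/2) * (y ⬝ᵥ y)) := by
    intro y; rw [Matrix.toLin'_apply, quad]
  simp_rw [step2] at step
  have hstd : ∫ y : Fin m → ℝ, Real.exp (-(1/2) * (y ⬝ᵥ y)) = (2 * π) ^ ((m : ℝ) / 2) :=
    std_gauss m
  rw [hstd] at step
  have habs : |L.det| = S.det ^ ((1:ℝ)/2) := by
    rw [← Real.sqrt_eq_rpow, ← hdet2, Real.sqrt_mul_self_eq_abs]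
  have hpos : (0:ℝ) < |L.det| := abs_pos.mpr hdetL
  have hfin := (inv_mul_eq_iff_eq_mul₀ hpos.ne').mp step.symm
  rw [hfin, habs, mul_comm]

lemma gibbs_pt {a b : ℝ} (ha : 0 ≤ a) (hb : 0 < b) :
    0 ≤ a * Real.log a - a * Real.log b - a + b := by
  rcases eq_or_lt_of_le ha with h | h
  · simp [← h]; positivity
  · have hba : 0 < b / a := div_pos hb h
    have hlog := Real.log_le_sub_one_of_pos hba
    rw [Real.log_div hb.ne' h.ne'] at hlog
    have h2 := (mul_le_mul_iff_right₀ h).mpr hlog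
    have h3 : a * (b / a) = b := by field_simp
    nlinarith [h2]

lemma gibbs_pt_strict {a b : ℝ} (ha : 0 < a) (hb : 0 < b) (hne : a ≠ b) :
    0 < a * Real.log a - a * Real.log b - a + b := by
  have hba : 0 < b / a := div_pos hb ha
  have h1 : b / a ≠ 1 := by
    intro hh
    exact hne (by field_simp at hh; linarith)
  have hlog := Real.log_lt_sub_one_of_pos hba h1
  rw [Real.log_div hb.ne' ha.ne'] at hlog
  have h2 := (mul_lt_mul_iff_right₀ ha).mpr hlog
  have h3 : a * (b / a) = b := by field_simp
  nlinarith [h2]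

/-- Uniqueness of the maximum-entropy density: if a density `f` with mean `μ` and
covariance `S` attains the maximal differential entropy
`(1/2)·log((2π)^m·det S) + m/2`, then `f` equals the multivariate normal density
`mvnPdf μ S` almost everywhere w.r.t. Lebesgue measure. -/
theorem eq_mvnPdf_of_diffEntropy_eq_max (m : ℕ) (hm : 1 ≤ m) (μ : Fin m → ℝ)
    (S : Matrix (Fin m) (Fin m) ℝ) (hS : S.PosDef)
    (f : (Fin m → ℝ) → ℝ)
    (hf_nonneg : ∀ x, 0 ≤ f x)
    (hf_meas : Measurable f)
    (hf_int : ∫ x : Fin m → ℝ, f x = 1)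
    (hflogf : Integrable (fun x : Fin m → ℝ => f x * Real.log (f x)))
    (hmean : ∫ x : Fin m → ℝ, f x • x = μ)
    (hcov : ∀ i j, ∫ x : Fin m → ℝ, (x i - μ i) * (x j - μ j) * f x = S i j)
    (hmax : diffEntropy f = (1 / 2) * Real.log ((2 * π) ^ m * S.det) + m / 2) :
    ∀ᵐ x : Fin m → ℝ, f x = mvnPdf μ S x := by
  classical
  set g := mvnPdf μ S with hgdef
  have hdetS : 0 < S.det := hS.det_pos
  have h2π : (0:ℝ) < 2 * π := by positivity
  have hg_pos : ∀ x, 0 < g x := by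
    intro x
    unfold g
    unfold mvnPdf
    positivity
  have hg_cont : Continuous g := by
    unfold g; unfold mvnPdf
    exact continuous_const.mul (Real.continuous_exp.comp (continuous_const.mul
      ((contquad S⁻¹).comp (continuous_id.sub continuous_const))))
  -- integral of g is 1
  have hsub : ∫ x : Fin m → ℝ, Real.exp (-(1/2) * ((x - μ) ⬝ᵥ S⁻¹ *ᵥ (x - μ)))
      = (2 * π) ^ ((m : ℝ) / 2) * S.det ^ ((1:ℝ)/2) := by
    rw [integral_sub_right_eq_self
      (fun y : Fin m → ℝ => Real.exp (-(1/2) * (y ⬝ᵥ S⁻¹ *ᵥ y))) μ]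
    exact gauss_quad S hS
  have hg_int1 : ∫ x : Fin m → ℝ, g x = 1 := by
    unfold g; unfold mvnPdf
    rw [integral_const_mul, hsub, mul_mul_mul_comm, ← Real.rpow_add h2π, ← Real.rpow_add hdetS,
      show -(m:ℝ)/2 + (m:ℝ)/2 = 0 by ring, show -(1:ℝ)/2 + 1/2 = 0 by ring,
      Real.rpow_zero, Real.rpow_zero, mul_one]
  have hg_integrable : Integrable g := by
    by_contra h
    rw [integral_undef h] at hg_int1
    norm_num at hg_int1
  have hf_integrable : Integrable f := by
    by_contra h
    rw [integral_undef h] at hf_int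
    norm_num at hf_int
  -- logarithm of g
  set C : ℝ := (-(m:ℝ)/2) * Real.log (2*π) + (-(1:ℝ)/2) * Real.log S.det with hCdef
  have hlogg : ∀ x, Real.log (g x)
      = C + (-(1/2) * ((x - μ) ⬝ᵥ S⁻¹ *ᵥ (x - μ))) := by
    intro x
    unfold g; unfold mvnPdf
    rw [Real.log_mul (by positivity) (Real.exp_ne_zero _),
      Real.log_mul (by positivity) (by positivity),
      Real.log_exp, Real.log_rpow h2π, Real.log_rpow hdetS]
  -- symmetry of S
  have hSsym : ∀ i j, S j i = S i j := by
    intro i j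
    have := congrFun (congrFun hS.1 i) j
    simpa using this
  have hSdiag : ∀ i, 0 < S i i := by
    intro i
    exact hS.diag_pos
  -- integrability of covariance integrands
  have hmeas_ij : ∀ i j, Measurable fun x : Fin m → ℝ =>
      (x i - μ i) * (x j - μ j) * f x := by
    intro i j
    exact (((measurable_pi_apply i).sub measurable_const).mul
      ((measurable_pi_apply j).sub measurable_const)).mul hf_meas
  have hii : ∀ i, Integrable (fun x : Fin m → ℝ => (x i - μ i) * (x i - μ i) * f x) := by
    intro i
    by_contra h
    have := integral_undef h
    rw [hcov i i] at this
    exact (hSdiag i).ne' this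
  have hij : ∀ i j, Integrable (fun x : Fin m → ℝ => (x i - μ i) * (x j - μ j) * f x) := by
    intro i j
    refine Integrable.mono' (g := fun x =>
        ((x i - μ i) * (x i - μ i) * f x + (x j - μ j) * (x j - μ j) * f x) / 2)
      (((hii i).add (hii j)).div_const 2)
      (hmeas_ij i j).aestronglyMeasurable (Filter.Eventually.of_forall fun x => ?_)
    have hf := hf_nonneg x
    have habs : |(x i - μ i) * (x j - μ j)|
        ≤ ((x i - μ i) * (x i - μ i) + (x j - μ j) * (x j - μ j)) / 2 := by
      refine abs_le.mpr ⟨?_, ?_⟩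
      · nlinarith [sq_nonneg (x i - μ i + (x j - μ j))]
      · nlinarith [sq_nonneg (x i - μ i - (x j - μ j))]
    have : ‖(x i - μ i) * (x j - μ j) * f x‖ = |(x i - μ i) * (x j - μ j)| * f x := by
      rw [Real.norm_eq_abs, abs_mul, abs_of_nonneg hf]
    rw [this]
    calc |(x i - μ i) * (x j - μ j)| * f x
        ≤ (((x i - μ i) * (x i - μ i) + (x j - μ j) * (x j - μ j)) / 2) * f x :=
          mul_le_mul_of_nonneg_right habs hf
      _ = ((x i - μ i) * (x i - μ i) * f x + (x j - μ j) * (x j - μ j) * f x) / 2 := by ring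
  -- expand f·Q as a finite sum
  have hQ : (fun x : Fin m → ℝ => f x * ((x - μ) ⬝ᵥ S⁻¹ *ᵥ (x - μ)))
      = fun x => ∑ i : Fin m, ∑ j : Fin m,
          S⁻¹ i j * ((x i - μ i) * (x j - μ j) * f x) := by
    funext x
    simp only [dotProduct, Matrix.mulVec, Pi.sub_apply]
    rw [Finset.mul_sum]
    refine Finset.sum_congr rfl fun i _ => ?_
    rw [Finset.mul_sum, Finset.mul_sum]
    refine Finset.sum_congr rfl fun j _ => ?_
    ring
  have hfQ_int : Integrable (fun x : Fin m → ℝ => f x * ((x - μ) ⬝ᵥ S⁻¹ *ᵥ (x - μ))) := by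
    rw [hQ]
    refine integrable_finset_sum _ fun i _ => integrable_finset_sum _ fun j _ => ?_
    exact (hij i j).const_mul _
  have htrace : ∑ i : Fin m, ∑ j : Fin m, S⁻¹ i j * S i j = (m : ℝ) := by
    have hinv : S⁻¹ * S = 1 := Matrix.nonsing_inv_mul S hdetS.ne'.isUnit
    have : ∑ i : Fin m, ∑ j : Fin m, S⁻¹ i j * S i j
        = Matrix.trace (S⁻¹ * S) := by
      simp only [Matrix.trace, Matrix.diag, Matrix.mul_apply]
      refine Finset.sum_congr rfl fun i _ => Finset.sum_congr rfl fun j _ => ?_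
      rw [hSsym j i]
    rw [this, hinv, Matrix.trace_one]
    simp
  have hfQ_val : ∫ x : Fin m → ℝ, f x * ((x - μ) ⬝ᵥ S⁻¹ *ᵥ (x - μ)) = (m : ℝ) := by
    rw [hQ]
    rw [integral_finset_sum _ fun i _ => integrable_finset_sum _ fun j _ =>
      (hij i j).const_mul (S⁻¹ i j)]
    have : ∀ i : Fin m, ∫ x : Fin m → ℝ, ∑ j : Fin m,
        S⁻¹ i j * ((x i - μ i) * (x j - μ j) * f x)
        = ∑ j : Fin m, S⁻¹ i j * S i j := by
      intro i
      rw [integral_finset_sum _ fun j _ => (hij i j).const_mul _]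
      refine Finset.sum_congr rfl fun j _ => ?_
      rw [integral_const_mul, hcov i j]
    simp_rw [this]
    exact htrace
  -- integral of f * log g
  have hflogg_int : Integrable (fun x : Fin m → ℝ => f x * Real.log (g x)) := by
    have : (fun x : Fin m → ℝ => f x * Real.log (g x))
        = fun x => C * f x + (-(1/2)) * (f x * ((x - μ) ⬝ᵥ S⁻¹ *ᵥ (x - μ))) := by
      funext x; rw [hlogg x]; ring
    rw [this]
    exact (hf_integrable.const_mul C).add (hfQ_int.const_mul _)
  have hflogg_val : ∫ x : Fin m → ℝ, f x * Real.log (g x) = C - m / 2 := by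
    have heq : (fun x : Fin m → ℝ => f x * Real.log (g x))
        = fun x => C * f x + (-(1/2)) * (f x * ((x - μ) ⬝ᵥ S⁻¹ *ᵥ (x - μ))) := by
      funext x; rw [hlogg x]; ring
    rw [heq, integral_add (hf_integrable.const_mul C) (hfQ_int.const_mul _),
      integral_const_mul, integral_const_mul, hf_int, hfQ_val]
    ring
  -- value of ∫ f log f from hmax
  have hC : C = -((1/2) * Real.log ((2*π) ^ m * S.det)) := by
    rw [Real.log_mul (by positivity) hdetS.ne', Real.log_pow, hCdef]
    push_cast
    ring
  have hflogf_val : ∫ x : Fin m → ℝ, f x * Real.log (f x) = C - m / 2 := by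
    have := hmax
    unfold diffEntropy at this
    rw [hC]
    linarith
  -- the nonnegative function F
  set F : (Fin m → ℝ) → ℝ := fun x =>
    f x * Real.log (f x) - f x * Real.log (g x) - f x + g x with hFdef
  have hF_int : Integrable F :=
    ((hflogf.sub hflogg_int).sub hf_integrable).add hg_integrable
  have hF_val : ∫ x : Fin m → ℝ, F x = 0 := by
    have h2 : Integrable (fun x : Fin m → ℝ =>
        f x * Real.log (f x) - f x * Real.log (g x) - f x) :=
      (hflogf.sub hflogg_int).sub hf_integrable
    have e1 : ∫ x : Fin m → ℝ, F x
        = (∫ x : Fin m → ℝ, (f x * Real.log (f x) - f x * Real.log (g x) - f x))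
          + ∫ x : Fin m → ℝ, g x := integral_add h2 hg_integrable
    have e2 : ∫ x : Fin m → ℝ, (f x * Real.log (f x) - f x * Real.log (g x) - f x)
        = (∫ x : Fin m → ℝ, (f x * Real.log (f x) - f x * Real.log (g x)))
          - ∫ x : Fin m → ℝ, f x := integral_sub (hflogf.sub hflogg_int) hf_integrable
    have e3 : ∫ x : Fin m → ℝ, (f x * Real.log (f x) - f x * Real.log (g x))
        = (∫ x : Fin m → ℝ, f x * Real.log (f x)) - ∫ x : Fin m → ℝ, f x * Real.log (g x) :=
      integral_sub hflogf hflogg_int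
    rw [e1, e2, e3, hflogf_val, hflogg_val, hf_int, hg_int1]
    ring
  have hF_nonneg : ∀ x, 0 ≤ F x := by
    intro x
    exact gibbs_pt (hf_nonneg x) (hg_pos x)
  have hF0 : F =ᵐ[volume] 0 :=
    (integral_eq_zero_iff_of_nonneg hF_nonneg hF_int).mp hF_val
  filter_upwards [hF0] with x hx
  have hx0 : F x = 0 := hx
  by_contra hne
  rcases eq_or_lt_of_le (hf_nonneg x) with h0 | hpos
  · have hFx : F x = g x := by
      show f x * Real.log (f x) - f x * Real.log (g x) - f x + g x = g x
      rw [← h0]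
      simp
    rw [hx0] at hFx
    exact (hg_pos x).ne hFx
  · exact (gibbs_pt_strict hpos (hg_pos x) hne).ne' hx0
end

section
/- Let Σₙ be a symmetric invertible real n×n matrix, k ∈ ℝ^n, and κ², β² ∈ ℝ. Define γ² := κ² - kᵀ Σₙ⁻¹ k and assume β² + γ² ≠ 0. Let Σ₊ denote the (n+1)×(n+1) block matrix [[Σₙ, k],[kᵀ, κ² + β²]] and let k₊ ∈ ℝ^{n+1} be the vector whose first n entries are those of k and whose last entry is κ². Then Σ₊ is invertible and κ² - k₊ᵀ Σ₊⁻¹ k₊ = (β² · γ²) / (β² + γ²). -/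
open Matrix

/-- With `Σ₊ = [[Σₙ, k],[kᵀ, κ² + β²]]` and `k₊ = (k, κ²)`, if `Σₙ` is symmetric and
invertible and `β² + γ² ≠ 0` where `γ² = κ² - kᵀΣₙ⁻¹k`, then `Σ₊` is invertible and the
model-based squared error satisfies `κ² - k₊ᵀΣ₊⁻¹k₊ = β²γ²/(β² + γ²)`. -/
theorem improved_error_formula (n : ℕ) (Sn : Matrix (Fin n) (Fin n) ℝ)
    (hSym : Sn.IsSymm) (hSn : IsUnit Sn.det)
    (k : Fin n → ℝ) (κ2 β2 : ℝ)
    (hne : β2 + (κ2 - k ⬝ᵥ Sn⁻¹ *ᵥ k) ≠ 0) :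
    IsUnit (Matrix.fromBlocks Sn (Matrix.replicateCol (Fin 1) k)
      (Matrix.replicateRow (Fin 1) k) !![κ2 + β2]).det ∧
    κ2 - (Sum.elim k fun _ => κ2) ⬝ᵥ
        (Matrix.fromBlocks Sn (Matrix.replicateCol (Fin 1) k)
          (Matrix.replicateRow (Fin 1) k) !![κ2 + β2])⁻¹ *ᵥ (Sum.elim k fun _ => κ2) =
      β2 * (κ2 - k ⬝ᵥ Sn⁻¹ *ᵥ k) / (β2 + (κ2 - k ⬝ᵥ Sn⁻¹ *ᵥ k)) := by
  haveI : Invertible Sn := Matrix.invertibleOfIsUnitDet Sn hSn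
  set a := k ⬝ᵥ Sn⁻¹ *ᵥ k with ha
  set A := Matrix.fromBlocks Sn (Matrix.replicateCol (Fin 1) k) (Matrix.replicateRow (Fin 1) k) !![κ2 + β2] with hA
  have hdet : A.det = Sn.det * (β2 + (κ2 - a)) := by
    rw [hA, det_fromBlocks₁₁]
    congr 1
    have hSchur : !![κ2 + β2] - Matrix.replicateRow (Fin 1) k * ⅟Sn * Matrix.replicateCol (Fin 1) k
        = !![β2 + (κ2 - a)] := by
      ext i j
      fin_cases i; fin_cases j
      rw [Matrix.sub_apply, invOf_eq_nonsing_inv, Matrix.mul_assoc, ← replicateCol_mulVec, replicateRow_mul_replicateCol_apply]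
      simp [← ha]
      ring
    rw [hSchur, det_fin_one]
    simp
  have hunit : IsUnit A.det := by
    rw [hdet]; exact hSn.mul (isUnit_iff_ne_zero.mpr hne)
  refine ⟨hunit, ?_⟩
  set t := (κ2 - a) / (β2 + (κ2 - a)) with ht
  set x : Fin n ⊕ Fin 1 → ℝ := Sum.elim ((1 - t) • (Sn⁻¹ *ᵥ k)) (fun _ => t) with hx
  have hcol : Matrix.replicateCol (Fin 1) k *ᵥ (fun _ => t) = t • k := by
    ext i
    simp [Matrix.mulVec, dotProduct, Matrix.replicateCol, mul_comm]
  have h1 : Sn *ᵥ ((1 - t) • (Sn⁻¹ *ᵥ k)) + Matrix.replicateCol (Fin 1) k *ᵥ (fun _ => t) = k := by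
    rw [hcol, Matrix.mulVec_smul, Matrix.mulVec_mulVec, Matrix.mul_nonsing_inv _ hSn,
      Matrix.one_mulVec]
    ext i
    simp only [Pi.add_apply, Pi.smul_apply, smul_eq_mul]
    ring
  have h2 : Matrix.replicateRow (Fin 1) k *ᵥ ((1 - t) • (Sn⁻¹ *ᵥ k)) + !![κ2 + β2] *ᵥ (fun _ => t)
      = fun _ => κ2 := by
    ext j
    have e1 : Matrix.replicateRow (Fin 1) k *ᵥ ((1 - t) • (Sn⁻¹ *ᵥ k)) = fun _ => (1 - t) * a := by
      ext j'
      rw [replicateRow_mulVec_eq_const]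
      simp [dotProduct_smul, ha, smul_eq_mul]
    have e2 : (!![κ2 + β2] *ᵥ fun _ => t) j = (κ2 + β2) * t := by
      simp [Matrix.mulVec, dotProduct]
    rw [Pi.add_apply, e1, e2, ht]
    field_simp
    ring
  have hAx : A *ᵥ x = Sum.elim k fun _ => κ2 := by
    rw [hA, hx, fromBlocks_mulVec]
    simp only [Sum.elim_comp_inl, Sum.elim_comp_inr]
    rw [h1, h2]
  have hinv : A⁻¹ *ᵥ (Sum.elim k fun _ => κ2) = x := by
    rw [← hAx, Matrix.mulVec_mulVec, Matrix.nonsing_inv_mul _ hunit, Matrix.one_mulVec]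
  rw [hinv, hx, sumElim_dotProduct_sumElim]
  have e3 : k ⬝ᵥ (1 - t) • (Sn⁻¹ *ᵥ k) = (1 - t) * a := by
    rw [dotProduct_smul, smul_eq_mul, ← ha]
  have e4 : (fun _ : Fin 1 => κ2) ⬝ᵥ (fun _ => t) = κ2 * t := by
    simp [dotProduct]
  rw [e3, e4, ht]
  field_simp
  ring
end

section
/- Let Σₙ be a symmetric invertible real n×n matrix, k ∈ ℝ^n, κ², β² ∈ ℝ, γ² := κ² - kᵀ Σₙ⁻¹ k, and assume β² + γ² ≠ 0. Let Σ₊ := [[Σₙ, k],[kᵀ, κ² + β²]] and let k₊ ∈ ℝ^{n+1} have first n entries equal to those of k and last entry κ². For any θₙ ∈ ℝ^n and θ_{n+1} ∈ ℝ, let θ₊ ∈ ℝ^{n+1} be the vector obtained by appending θ_{n+1} to θₙ, and set θ' := kᵀ Σₙ⁻¹ θₙ. Then k₊ᵀ Σ₊⁻¹ θ₊ = (β² · θ' + γ² · θ_{n+1}) / (β² + γ²). -/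
open Matrix

/-- With `Σ₊ = [[Σₙ, k],[kᵀ, κ² + β²]]`, `k₊ = (k, κ²)` and `θ₊ = (θₙ, θ_{n+1})`,
if `Σₙ` is symmetric and invertible and `β² + γ² ≠ 0` where `γ² = κ² - kᵀΣₙ⁻¹k`, then
the model-based answer satisfies
`k₊ᵀΣ₊⁻¹θ₊ = (β²·θ' + γ²·θ_{n+1})/(β² + γ²)` where `θ' = kᵀΣₙ⁻¹θₙ`. -/
theorem improved_answer_formula (n : ℕ) (Sn : Matrix (Fin n) (Fin n) ℝ)
    (hSym : Sn.IsSymm) (hSn : IsUnit Sn.det)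
    (k : Fin n → ℝ) (κ2 β2 : ℝ)
    (hne : β2 + (κ2 - k ⬝ᵥ Sn⁻¹ *ᵥ k) ≠ 0)
    (θn : Fin n → ℝ) (θn1 : ℝ) :
    (Sum.elim k fun _ => κ2) ⬝ᵥ
        (Matrix.fromBlocks Sn (Matrix.replicateCol (Fin 1) k)
          (Matrix.replicateRow (Fin 1) k) !![κ2 + β2])⁻¹ *ᵥ (Sum.elim θn fun _ => θn1) =
      (β2 * (k ⬝ᵥ Sn⁻¹ *ᵥ θn) + (κ2 - k ⬝ᵥ Sn⁻¹ *ᵥ k) * θn1) /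
        (β2 + (κ2 - k ⬝ᵥ Sn⁻¹ *ᵥ k)) := by
  letI : Invertible Sn := Sn.invertibleOfIsUnitDet hSn
  set b := k ⬝ᵥ Sn⁻¹ *ᵥ k with hb
  set s := β2 + (κ2 - b) with hs
  have hD : !![κ2 + β2] - Matrix.replicateRow (Fin 1) k * ⅟Sn * Matrix.replicateCol (Fin 1) k
      = !![s] := by
    rw [invOf_eq_nonsing_inv]
    ext i j
    fin_cases i; fin_cases j
    simp [Matrix.mul_apply, Matrix.sub_apply, mulVec, dotProduct, Finset.mul_sum,
      mul_comm, mul_assoc, hs, hb]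
    have hsum : ∑ x : Fin n, ∑ i : Fin n, k x * (k i * Sn⁻¹ i x) =
        ∑ x : Fin n, ∑ i : Fin n, k x * (k i * Sn⁻¹ x i) := by
      rw [Finset.sum_comm]
      exact Finset.sum_congr rfl fun x _ => Finset.sum_congr rfl fun i _ => by ring
    rw [hsum]; ring
  letI : Invertible (!![s] : Matrix (Fin 1) (Fin 1) ℝ) :=
    Matrix.invertibleOfIsUnitDet _ (by simp [hne])
  letI : Invertible (!![κ2 + β2] - Matrix.replicateRow (Fin 1) k * ⅟Sn * Matrix.replicateCol (Fin 1) k) :=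
    hD ▸ ‹Invertible (!![s] : Matrix (Fin 1) (Fin 1) ℝ)›
  letI := Matrix.fromBlocks₁₁Invertible Sn (Matrix.replicateCol (Fin 1) k) (Matrix.replicateRow (Fin 1) k)
    !![κ2 + β2]
  have hSchurInv : ⅟(!![κ2 + β2] - Matrix.replicateRow (Fin 1) k * ⅟Sn * Matrix.replicateCol (Fin 1) k)
      = !![s⁻¹] := by
    apply invOf_eq_right_inv
    rw [hD]
    ext i j
    fin_cases i; fin_cases j
    simp [Matrix.mul_apply, hne]
  rw [(invOf_eq_nonsing_inv _).symm, Matrix.invOf_fromBlocks₁₁_eq, hSchurInv,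
    invOf_eq_nonsing_inv]
  simp only [fromBlocks_mulVec, sumElim_dotProduct_sumElim, Matrix.add_mulVec,
    Matrix.neg_mulVec, dotProduct_add, dotProduct_neg, ← Matrix.mulVec_mulVec]
  have hcol : ∀ u : Fin 1 → ℝ, Matrix.replicateCol (Fin 1) k *ᵥ u = u 0 • k := by
    intro u; funext i; simp [mulVec, dotProduct, Fin.sum_univ_one, mul_comm]
  have hone : ∀ (x : ℝ) (u : Fin 1 → ℝ), !![x] *ᵥ u = Function.const (Fin 1) (x * u 0) := by
    intro x u; funext i; fin_cases i; simp [mulVec, dotProduct, Fin.sum_univ_one]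
  have hconst : ∀ (u : Fin 1 → ℝ), (fun _ : Fin 1 => κ2) ⬝ᵥ u = κ2 * u 0 := by
    intro u; simp [dotProduct, Fin.sum_univ_one]
  simp only [Sum.elim_comp_inl, Sum.elim_comp_inr, replicateRow_mulVec_eq_const, hone, hcol,
    hconst, Function.const_apply, Matrix.mulVec_smul, dotProduct_smul, smul_eq_mul]
  rw [← hb]
  field_simp
  ring
end

section
/- Let Σₙ be a symmetric positive-definite real n×n matrix, k ∈ ℝ^n, and κ² ∈ ℝ such that the symmetric (n+1)×(n+1) block matrix [[Σₙ, k],[kᵀ, κ²]] is positive semidefinite. Let β ≥ 0, define γ² := κ² - kᵀ Σₙ⁻¹ k, and assume β² + γ² > 0. Let Σ₊ := [[Σₙ, k],[kᵀ, κ² + β²]] and let k₊ ∈ ℝ^{n+1} have first n entries equal to those of k and last entry κ². Then Σ₊ is invertible, γ² ≥ 0, the model-based squared error β̈² := κ² - k₊ᵀ Σ₊⁻¹ k₊ is nonnegative, and √(β̈²) ≤ β, with equality if and only if β = 0. -/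
open Matrix

/-- Theorem 1 of the paper: let `[[Σₙ, k],[kᵀ, κ²]]` (the covariance matrix of the
past raw answers together with the new snippet's exact answer) be positive
semidefinite with `Σₙ` positive definite, let `β ≥ 0` be the raw error, and assume
`β² + γ² > 0` where `γ² = κ² - kᵀΣₙ⁻¹k`.  Then `Σ₊ = [[Σₙ, k],[kᵀ, κ² + β²]]` is
invertible, `γ² ≥ 0`, the model-based squared error `β̈² = κ² - k₊ᵀΣ₊⁻¹k₊` is
nonnegative, and the improved error satisfies `β̈ ≤ β` with equality iff `β = 0`. -/
theorem improved_error_never_larger (n : ℕ) (Sn : Matrix (Fin n) (Fin n) ℝ)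
    (hSn : Sn.PosDef)
    (k : Fin n → ℝ) (κ2 : ℝ)
    (hpsd : (Matrix.fromBlocks Sn (Matrix.replicateCol (Fin 1) k)
      (Matrix.replicateRow (Fin 1) k) !![κ2]).PosSemidef)
    (β : ℝ) (hβ : 0 ≤ β)
    (hpos : 0 < β ^ 2 + (κ2 - k ⬝ᵥ Sn⁻¹ *ᵥ k)) :
    IsUnit (Matrix.fromBlocks Sn (Matrix.replicateCol (Fin 1) k)
      (Matrix.replicateRow (Fin 1) k) !![κ2 + β ^ 2]).det ∧
    0 ≤ κ2 - k ⬝ᵥ Sn⁻¹ *ᵥ k ∧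
    0 ≤ κ2 - (Sum.elim k fun _ => κ2) ⬝ᵥ
        (Matrix.fromBlocks Sn (Matrix.replicateCol (Fin 1) k)
          (Matrix.replicateRow (Fin 1) k) !![κ2 + β ^ 2])⁻¹ *ᵥ (Sum.elim k fun _ => κ2) ∧
    Real.sqrt (κ2 - (Sum.elim k fun _ => κ2) ⬝ᵥ
        (Matrix.fromBlocks Sn (Matrix.replicateCol (Fin 1) k)
          (Matrix.replicateRow (Fin 1) k) !![κ2 + β ^ 2])⁻¹ *ᵥ (Sum.elim k fun _ => κ2)) ≤ β ∧
    (Real.sqrt (κ2 - (Sum.elim k fun _ => κ2) ⬝ᵥ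
        (Matrix.fromBlocks Sn (Matrix.replicateCol (Fin 1) k)
          (Matrix.replicateRow (Fin 1) k) !![κ2 + β ^ 2])⁻¹ *ᵥ (Sum.elim k fun _ => κ2)) = β ↔
      β = 0) := by

  classical
  have hdet : IsUnit Sn.det := hSn.det_pos.ne'.isUnit
  have hu1 : Sn *ᵥ (Sn⁻¹ *ᵥ k) = k := by
    rw [Matrix.mulVec_mulVec, Matrix.mul_nonsing_inv _ hdet, Matrix.one_mulVec]
  have hcol : ∀ c : ℝ, (Matrix.replicateCol (Fin 1) k) *ᵥ (fun _ => c) = c • k := by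
    intro c; ext i; simp [Matrix.mulVec, dotProduct, mul_comm]
  have hrow : ∀ w : Fin n → ℝ, (Matrix.replicateRow (Fin 1) k) *ᵥ w = fun _ : Fin 1 => k ⬝ᵥ w := by
    intro w; ext j; simp [Matrix.mulVec, dotProduct]
  have h11 : ∀ (a c : ℝ), (!![a] : Matrix (Fin 1) (Fin 1) ℝ) *ᵥ (fun _ => c) = fun _ => a * c := by
    intro a c; ext j; fin_cases j; simp [Matrix.mulVec, dotProduct]
  set s : ℝ := k ⬝ᵥ Sn⁻¹ *ᵥ k with hs
  set δ : ℝ := β ^ 2 + (κ2 - s) with hδdef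
  have hδ : 0 < δ := hpos
  -- γ² ≥ 0
  have hγ : 0 ≤ κ2 - s := by
    have h := hpsd.dotProduct_mulVec_nonneg (Sum.elim (-(Sn⁻¹ *ᵥ k)) (fun _ : Fin 1 => (1:ℝ)))
    have hx : (Sum.elim (-(Sn⁻¹ *ᵥ k)) (fun _ : Fin 1 => (1:ℝ))) ∘ Sum.inl
        = -(Sn⁻¹ *ᵥ k) := rfl
    have hy : (Sum.elim (-(Sn⁻¹ *ᵥ k)) (fun _ : Fin 1 => (1:ℝ))) ∘ Sum.inr
        = fun _ : Fin 1 => (1:ℝ) := rfl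
    rw [Matrix.fromBlocks_mulVec, hx, hy, hcol, h11, Matrix.mulVec_neg, hu1,
      Matrix.mulVec_neg, hrow] at h
    simp only [star_trivial, one_smul, neg_add_cancel] at h
    rw [sumElim_dotProduct_sumElim, dotProduct_zero, zero_add] at h
    simpa [dotProduct, dotProduct_neg, hs, mul_comm] using h
  -- invertibility of Σ₊
  haveI : Invertible Sn := Sn.invertibleOfIsUnitDet hdet
  have hentry : Matrix.replicateRow (Fin 1) k * Sn⁻¹ * Matrix.replicateCol (Fin 1) k = !![s] := by
    ext i j; fin_cases i; fin_cases j
    simp [hs, Matrix.mul_apply, dotProduct, Matrix.mulVec, Finset.mul_sum,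
      Finset.sum_mul, mul_assoc]
    rw [Finset.sum_comm]
  have hunit : IsUnit (Matrix.fromBlocks Sn (Matrix.replicateCol (Fin 1) k)
      (Matrix.replicateRow (Fin 1) k) !![κ2 + β ^ 2]) := by
    rw [Matrix.isUnit_fromBlocks_iff_of_invertible₁₁]
    rw [Matrix.invOf_eq_nonsing_inv, hentry]
    rw [Matrix.isUnit_iff_isUnit_det]
    have : (!![κ2 + β ^ 2] - !![s]).det = δ := by
      simp [hδdef]; ring
    rw [this]
    exact hδ.ne'.isUnit
  have hdetP : IsUnit (Matrix.fromBlocks Sn (Matrix.replicateCol (Fin 1) k)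
      (Matrix.replicateRow (Fin 1) k) !![κ2 + β ^ 2]).det :=
    (Matrix.isUnit_iff_isUnit_det _).mp hunit
  -- the solution of Σ₊ v = k₊
  set v : Fin n ⊕ Fin 1 → ℝ :=
    Sum.elim ((β ^ 2 / δ) • (Sn⁻¹ *ᵥ k)) (fun _ => (κ2 - s) / δ) with hv
  have hsolve : (Matrix.fromBlocks Sn (Matrix.replicateCol (Fin 1) k)
      (Matrix.replicateRow (Fin 1) k) !![κ2 + β ^ 2]) *ᵥ v = Sum.elim k fun _ => κ2 := by
    rw [hv, Matrix.fromBlocks_mulVec]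
    have hx : (Sum.elim ((β ^ 2 / δ) • (Sn⁻¹ *ᵥ k)) (fun _ : Fin 1 => (κ2 - s) / δ)) ∘ Sum.inl
        = (β ^ 2 / δ) • (Sn⁻¹ *ᵥ k) := rfl
    have hy : (Sum.elim ((β ^ 2 / δ) • (Sn⁻¹ *ᵥ k)) (fun _ : Fin 1 => (κ2 - s) / δ)) ∘ Sum.inr
        = fun _ : Fin 1 => (κ2 - s) / δ := rfl
    rw [hx, hy, hcol, h11, Matrix.mulVec_smul, hu1, Matrix.mulVec_smul, hrow]
    ext x
    rcases x with i | j
    · simp only [Sum.elim_inl, Pi.add_apply, Pi.smul_apply, smul_eq_mul]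
      field_simp
      ring
    · simp only [Sum.elim_inr, Pi.add_apply, Pi.smul_apply, smul_eq_mul, ← hs]
      field_simp
      ring
  have hinv : (Matrix.fromBlocks Sn (Matrix.replicateCol (Fin 1) k)
      (Matrix.replicateRow (Fin 1) k) !![κ2 + β ^ 2])⁻¹ *ᵥ (Sum.elim k fun _ => κ2) = v := by
    rw [← hsolve, Matrix.mulVec_mulVec, Matrix.nonsing_inv_mul _ hdetP, Matrix.one_mulVec]
  have hval : κ2 - (Sum.elim k fun _ => κ2) ⬝ᵥ
      (Matrix.fromBlocks Sn (Matrix.replicateCol (Fin 1) k)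
        (Matrix.replicateRow (Fin 1) k) !![κ2 + β ^ 2])⁻¹ *ᵥ (Sum.elim k fun _ => κ2)
      = β ^ 2 * (κ2 - s) / δ := by
    rw [hinv, hv, sumElim_dotProduct_sumElim, dotProduct_smul]
    have : (fun _ : Fin 1 => κ2) ⬝ᵥ (fun _ : Fin 1 => (κ2 - s) / δ) = κ2 * ((κ2 - s) / δ) := by
      simp [dotProduct]
    rw [this, ← hs]
    have hδ0 : δ ≠ 0 := hδ.ne'
    field_simp
    have e : δ * (β ^ 2 / δ) = β ^ 2 := by field_simp
    simp only [smul_eq_mul]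
    linear_combination (-s) * e + κ2 * hδdef
  have hβ2nn : (0:ℝ) ≤ β ^ 2 * (κ2 - s) / δ :=
    div_nonneg (mul_nonneg (sq_nonneg β) hγ) hδ.le
  have hle : β ^ 2 * (κ2 - s) / δ ≤ β ^ 2 := by
    rw [div_le_iff₀ hδ]
    have h1 : κ2 - s ≤ δ := by nlinarith [sq_nonneg β]
    nlinarith [sq_nonneg β]
  refine ⟨hdetP, hγ, hval ▸ hβ2nn, ?_, ?_⟩
  · rw [hval]
    calc Real.sqrt (β ^ 2 * (κ2 - s) / δ) ≤ Real.sqrt (β ^ 2) := Real.sqrt_le_sqrt hle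
    _ = β := by rw [Real.sqrt_sq hβ]
  · rw [hval]
    constructor
    · intro h
      have h2 : β ^ 2 * (κ2 - s) / δ = β ^ 2 := by
        rw [← Real.sq_sqrt hβ2nn, h]
      field_simp at h2
      rcases mul_eq_mul_left_iff.mp h2 with h2 | h2
      · have hb2 : β ^ 2 = 0 := by rw [hδdef] at h2; linarith
        exact pow_eq_zero_iff two_ne_zero |>.mp hb2
      · exact pow_eq_zero_iff two_ne_zero |>.mp h2
    · intro h; subst h; simp
end
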